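/- Assume linear travel times: t_a(z) = k_a z + b_a with k_a > 0 and b_a ≥ 0 for every link a, and let K = diag(k). Let x̃ be a baseline equilibrium (α = 0) with multiplier λ̃^H, let 𝓥 = { p ∈ 𝓟 : x̃_p > 0 }, and let Δ_𝓥 be the submatrix of Δ formed by the columns indexed by 𝓥. Assume: (a) the columns of Δ_𝓥 are linearly independent; (b) there is a unique path q minimizing C_p^A(Δx̃) over p ∈ 𝓟, and q ∉ 𝓥; (c) C_p^H(Δx̃) > λ̃^H for every p ∉ 𝓥. Set M = Δ_𝓥ᵀ K Δ_𝓥 and γ = (𝟙ᵀ M⁻¹ Δ_𝓥ᵀ K Δ e_q − 1)/(𝟙ᵀ M⁻¹ 𝟙), where e_q ∈ ℝ^𝓟 is the standard basis vector of path q and 𝟙 is the all-ones vector in ℝ^𝓥. If C_q^H(Δx̃) − λ̃^H + γ > 0, then there exists α₀ > 0 such that for every α ∈ (0, α₀) and every equilibrium (x^H, x^A) with autonomous fraction α, one has S(Δ(x^H + x^A)) > S(Δx̃). -/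

import Mathlib

open scoped BigOperators

lemma sum_support_eq' {P : Type*} [Fintype P] (xt : P → ℝ) (h : P → ℝ)
    (hz : ∀ p, ¬ 0 < xt p → h p = 0) :
    ∑ p, h p = ∑ v : {p : P // 0 < xt p}, h v.1 := by
  classical
  rw [← Finset.sum_subtype (Finset.univ.filter fun p => 0 < xt p)
    (by intro x; simp) h, Finset.sum_filter]
  apply Finset.sum_congr rfl
  intro p _
  by_cases hp : 0 < xt p <;> simp [hp, hz p]

open scoped BigOperators

/-- Aggregated link flow `f = Δ x`. -/
noncomputable def aggFlow {L P : Type*} [Fintype P] (Δ : L → P → ℝ) (x : P → ℝ) : L → ℝ :=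
  fun a => ∑ p, Δ a p * x p

/-- Human path cost `C_p^H(f) = Σ_a Δ_{ap} t_a(f_a)`. -/
noncomputable def CH {L P : Type*} [Fintype L] (Δ : L → P → ℝ) (t : L → ℝ → ℝ)
    (f : L → ℝ) (p : P) : ℝ :=
  ∑ a, Δ a p * t a (f a)

/-- Autonomous (marginal social) path cost
`C_p^A(f) = Σ_a Δ_{ap} (t_a(f_a) + f_a t_a'(f_a))`. -/
noncomputable def CA {L P : Type*} [Fintype L] (Δ : L → P → ℝ) (t : L → ℝ → ℝ)
    (f : L → ℝ) (p : P) : ℝ :=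
  ∑ a, Δ a p * (t a (f a) + f a * deriv (t a) (f a))

/-- Social cost `S(f) = Σ_a f_a t_a(f_a)`. -/
noncomputable def Scost {L : Type*} [Fintype L] (t : L → ℝ → ℝ) (f : L → ℝ) : ℝ :=
  ∑ a, f a * t a (f a)

/-- Equilibrium with autonomous fraction `α`: a feasible path flow pattern
together with multipliers `λ^H, λ^A` satisfying the Wardrop-like conditions. -/
noncomputable def IsEquilibrium {L P : Type*} [Fintype L] [Fintype P]
    (Δ : L → P → ℝ) (t : L → ℝ → ℝ) (α : ℝ) (xH xA : P → ℝ) : Prop :=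
  (∀ p, 0 ≤ xH p) ∧ (∀ p, 0 ≤ xA p) ∧ (∑ p, xH p = 1 - α) ∧ (∑ p, xA p = α) ∧
  ∃ lamH lamA : ℝ, ∀ p : P,
    (lamH ≤ CH Δ t (aggFlow Δ (fun r => xH r + xA r)) p ∧
      (0 < xH p → CH Δ t (aggFlow Δ (fun r => xH r + xA r)) p = lamH)) ∧
    (lamA ≤ CA Δ t (aggFlow Δ (fun r => xH r + xA r)) p ∧
      (0 < xA p → CA Δ t (aggFlow Δ (fun r => xH r + xA r)) p = lamA))

/-- Baseline equilibrium (`α = 0`): a single nonnegative unit-demand path flow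
vector satisfying the human Wardrop condition. -/
noncomputable def IsBaselineEquilibrium {L P : Type*} [Fintype L] [Fintype P]
    (Δ : L → P → ℝ) (t : L → ℝ → ℝ) (xt : P → ℝ) : Prop :=
  (∀ p, 0 ≤ xt p) ∧ (∑ p, xt p = 1) ∧
  ∃ lam : ℝ, ∀ p : P,
    lam ≤ CH Δ t (aggFlow Δ xt) p ∧ (0 < xt p → CH Δ t (aggFlow Δ xt) p = lam)

/-- BPR assumption: `t_a(z) = k_a z^n + b_a` for `z ≥ 0`, with `k_a > 0`,
`b_a ≥ 0`, and exponent `n ≥ 1`. -/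
def IsBPR {L : Type*} (t : L → ℝ → ℝ) (n : ℝ) (k b : L → ℝ) : Prop :=
  1 ≤ n ∧ (∀ a, 0 < k a) ∧ (∀ a, 0 ≤ b a) ∧
  ∀ a, ∀ z : ℝ, 0 ≤ z → t a z = k a * z ^ n + b a

open Finset Matrix

set_option maxHeartbeats 2000000 in
/-- Theorem 4 (deterioration condition): with linear travel times
`t_a(z) = k_a z + b_a`, a baseline equilibrium `x̃` with multiplier `λ̃^H` and
support `𝓥`, if the columns of `Δ_𝓥` are linearly independent, `q` is the unique
minimizer of `C^A` over all paths and is unused at the baseline, every unused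
path is strictly more costly than `λ̃^H`, and
`C_q^H(Δx̃) − λ̃^H + γ > 0` with
`γ = (𝟙ᵀ M⁻¹ Δ_𝓥ᵀ K Δ e_q − 1)/(𝟙ᵀ M⁻¹ 𝟙)`, then for all sufficiently small
positive autonomous fractions `α` the equilibrium social cost strictly exceeds
the baseline social cost. -/
theorem deterioration_condition {L P : Type*} [Fintype L] [Fintype P] [Nonempty P]
    [DecidableEq L] [DecidableEq P]
    (Δ : L → P → ℝ) (hΔ : ∀ a p, Δ a p = 0 ∨ Δ a p = 1)
    (t : L → ℝ → ℝ) (k b : L → ℝ)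
    (hk : ∀ a, 0 < k a) (hb : ∀ a, 0 ≤ b a)
    (hlin : ∀ a, ∀ z : ℝ, t a z = k a * z + b a)
    (xt : P → ℝ) (hxt0 : ∀ p, 0 ≤ xt p) (hxt1 : ∑ p, xt p = 1)
    (lamt : ℝ)
    (hlamt : ∀ p : P, lamt ≤ CH Δ t (aggFlow Δ xt) p ∧
      (0 < xt p → CH Δ t (aggFlow Δ xt) p = lamt))
    (DV : Matrix L {p : P // 0 < xt p} ℝ)
    (hDV : DV = Matrix.of fun a (v : {p : P // 0 < xt p}) => Δ a v.1)
    (hindep : ∀ y : {p : P // 0 < xt p} → ℝ, DV.mulVec y = 0 → y = 0)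
    (q : P)
    (hqmin : ∀ p : P, p ≠ q →
      CA Δ t (aggFlow Δ xt) q < CA Δ t (aggFlow Δ xt) p)
    (hqV : ¬ 0 < xt q)
    (hunused : ∀ p : P, ¬ 0 < xt p → lamt < CH Δ t (aggFlow Δ xt) p)
    (γ : ℝ)
    (hγ : γ = (dotProduct (fun _ => (1:ℝ))
        ((DV.transpose * Matrix.diagonal k * DV)⁻¹.mulVec
          (DV.transpose.mulVec (fun a => k a * Δ a q))) - 1) /
      dotProduct (fun _ => (1:ℝ))
        ((DV.transpose * Matrix.diagonal k * DV)⁻¹.mulVec (fun _ => (1:ℝ))))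
    (hpos : 0 < CH Δ t (aggFlow Δ xt) q - lamt + γ) :
    ∃ α₀ > (0:ℝ), ∀ α : ℝ, 0 < α → α < α₀ →
      ∀ xH xA : P → ℝ, IsEquilibrium Δ t α xH xA →
        Scost t (aggFlow Δ xt) < Scost t (aggFlow Δ (fun r => xH r + xA r)) := by
  classical
  have tderiv : ∀ a z, deriv (t a) z = k a := by
    intro a z
    have ht : t a = fun z => k a * z + b a := funext (hlin a)
    rw [ht]
    have := ((hasDerivAt_id z).const_mul (k a)).add_const (b a)
    simpa using this.deriv
  have CHdef : ∀ (f : L → ℝ) p, CH Δ t f p = ∑ a, Δ a p * (k a * f a + b a) := by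
    intro f p; unfold CH; exact Finset.sum_congr rfl fun a _ => by rw [hlin]
  have CAdef : ∀ (f : L → ℝ) p, CA Δ t f p = ∑ a, Δ a p * (2 * k a * f a + b a) := by
    intro f p; unfold CA
    refine Finset.sum_congr rfl fun a _ => ?_
    rw [hlin, tderiv]; ring
  rcases isEmpty_or_nonempty L with hL | hL
  · exfalso
    have h1 := hunused q hqV
    have h2 : CH Δ t (aggFlow Δ xt) q = 0 := by simp [CH]
    obtain ⟨p₀, hp₀⟩ : ∃ p, 0 < xt p := by
      by_contra h
      push_neg at h
      have : ∑ p, xt p = 0 := Finset.sum_eq_zero fun p _ => le_antisymm (h p) (hxt0 p)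
      rw [hxt1] at this; norm_num at this
    have h3 : CH Δ t (aggFlow Δ xt) p₀ = 0 := by simp [CH]
    have := (hlamt p₀).2 hp₀
    rw [h3] at this; rw [h2] at h1; linarith
  obtain ⟨p₀, hp₀⟩ : ∃ p, 0 < xt p := by
    by_contra h
    push_neg at h
    have : ∑ p, xt p = 0 := Finset.sum_eq_zero fun p _ => le_antisymm (h p) (hxt0 p)
    rw [hxt1] at this; norm_num at this
  haveI hVne : Nonempty {p : P // 0 < xt p} := ⟨⟨p₀, hp₀⟩⟩
  set Ksum := ∑ a, k a with hKsumdef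
  have hKsum : 0 < Ksum := Finset.sum_pos (fun a _ => hk a) Finset.univ_nonempty
  set kmin := Finset.univ.inf' Finset.univ_nonempty k with hkmindef
  have hkmin : 0 < kmin := (Finset.lt_inf'_iff _).2 fun a _ => hk a
  have hkminle : ∀ a, kmin ≤ k a := fun a => Finset.inf'_le _ (Finset.mem_univ a)
  -- matrices
  set K := Matrix.diagonal k with hK
  set M := DVᵀ * K * DV with hM
  have hDV01 : ∀ a v, DV a v = 0 ∨ DV a v = 1 := by
    intro a v; rw [hDV]; exact hΔ a v.1
  have hDVb : ∀ a v, 0 ≤ DV a v ∧ DV a v ≤ 1 := by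
    intro a v; rcases hDV01 a v with h | h <;> simp [h]
  have hmulKD : ∀ y, M.mulVec y = DVᵀ.mulVec (fun a => k a * (DV.mulVec y) a) := by
    intro y
    rw [hM, ← Matrix.mulVec_mulVec, ← Matrix.mulVec_mulVec]
    have hKv : K.mulVec (DV.mulVec y) = fun a => k a * (DV.mulVec y) a :=
      funext fun a => Matrix.mulVec_diagonal k _ a
    rw [hKv]
  have hquad : ∀ y, y ⬝ᵥ M.mulVec y = ∑ a, k a * (DV.mulVec y a) ^ 2 := by
    intro y
    rw [hmulKD, Matrix.dotProduct_mulVec, Matrix.vecMul_transpose]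
    simp only [dotProduct]
    exact Finset.sum_congr rfl fun a _ => by ring
  have hMinj : Function.Injective M.mulVec := by
    intro y1 y2 h
    have h0 : M.mulVec (y1 - y2) = 0 := by
      rw [Matrix.mulVec_sub, h, sub_self]
    have hq0 : ∑ a, k a * (DV.mulVec (y1 - y2) a) ^ 2 = 0 := by
      rw [← hquad, h0, dotProduct_zero]
    have hz : DV.mulVec (y1 - y2) = 0 := by
      funext a
      have := (Finset.sum_eq_zero_iff_of_nonneg
        (fun a _ => mul_nonneg (hk a).le (sq_nonneg _))).1 hq0 a (Finset.mem_univ a)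
      have hka := hk a
      have : (DV.mulVec (y1 - y2) a) ^ 2 = 0 := by
        by_contra hcon
        exact hcon (by nlinarith)
      simpa [pow_eq_zero_iff] using this
    have := hindep _ hz
    exact sub_eq_zero.1 this
  have hMunit : IsUnit M := Matrix.mulVec_injective_iff_isUnit.1 hMinj
  have hMdet : IsUnit M.det := (Matrix.isUnit_iff_isUnit_det M).1 hMunit
  have hrecover : ∀ y, M⁻¹.mulVec (M.mulVec y) = y := by
    intro y
    rw [Matrix.mulVec_mulVec, Matrix.nonsing_inv_mul M hMdet, Matrix.one_mulVec]
  -- s > 0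
  set s := dotProduct (fun _ => (1:ℝ)) (M⁻¹.mulVec (fun _ => (1:ℝ))) with hsdef
  have hs : 0 < s := by
    set w := M⁻¹.mulVec (fun _ => (1:ℝ)) with hw
    have hMw : M.mulVec w = fun _ => 1 := by
      rw [hw, Matrix.mulVec_mulVec, Matrix.mul_nonsing_inv M hMdet, Matrix.one_mulVec]
    have hDVw : ∃ a, DV.mulVec w a ≠ 0 := by
      by_contra hcon
      push_neg at hcon
      have hz : DV.mulVec w = 0 := funext hcon
      have : M.mulVec w = 0 := by
        rw [hmulKD]
        have : (fun a => k a * DV.mulVec w a) = 0 := by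
          funext a; rw [hz]; simp
        rw [this, Matrix.mulVec_zero]
      rw [hMw] at this
      have := congrFun this (Classical.arbitrary _)
      norm_num at this
    have hseq : s = ∑ a, k a * (DV.mulVec w a) ^ 2 := by
      rw [← hquad]
      have h1 : s = w ⬝ᵥ M.mulVec w := by
        rw [hMw, hsdef]; exact dotProduct_comm _ _
      exact h1
    rw [hseq]
    obtain ⟨a₀, ha₀⟩ := hDVw
    exact Finset.sum_pos' (fun a _ => mul_nonneg (hk a).le (sq_nonneg _))
      ⟨a₀, Finset.mem_univ a₀, mul_pos (hk a₀) (by positivity)⟩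
  -- C₂ bound
  set C₂ := (Finset.univ.sup' Finset.univ_nonempty
      (fun v : {p : P // 0 < xt p} => ∑ w, |M⁻¹ v w|)) * Ksum + 1 with hC₂def
  have hC₂pos : 0 < C₂ := by
    have h1 : (0:ℝ) ≤ Finset.univ.sup' Finset.univ_nonempty
        (fun v : {p : P // 0 < xt p} => ∑ w, |M⁻¹ v w|) := by
      obtain ⟨v⟩ := hVne
      exact le_trans (Finset.sum_nonneg fun w _ => abs_nonneg _)
        (Finset.le_sup' (fun v : {p : P // 0 < xt p} => ∑ w, |M⁻¹ v w|) (Finset.mem_univ v))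
    rw [hC₂def]
    nlinarith [hKsum]
  have hC₂bound : ∀ (y : {p : P // 0 < xt p} → ℝ) (B : ℝ), 0 ≤ B →
      (∀ a, |DV.mulVec y a| ≤ B) → ∀ v, |y v| ≤ C₂ * B := by
    intro y B hB hDB v
    have hy : y v = ∑ u, M⁻¹ v u * (M.mulVec y) u := by
      conv_lhs => rw [← hrecover y]
      rfl
    have hMyb : ∀ u, |(M.mulVec y) u| ≤ Ksum * B := by
      intro u
      rw [hmulKD]
      have : (DVᵀ.mulVec (fun a => k a * DV.mulVec y a)) u
          = ∑ a, DV a u * (k a * DV.mulVec y a) := by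
        simp [Matrix.mulVec, dotProduct, Matrix.transpose_apply]
      rw [this]
      calc |∑ a, DV a u * (k a * DV.mulVec y a)|
          ≤ ∑ a, |DV a u * (k a * DV.mulVec y a)| := Finset.abs_sum_le_sum_abs _ _
        _ ≤ ∑ a, k a * B := by
            refine Finset.sum_le_sum fun a _ => ?_
            rw [abs_mul, abs_mul]
            have h1 := hDVb a u
            have h2 := (hk a).le
            have h3 := hDB a
            have h4 : |DV a u| ≤ 1 := by rw [abs_of_nonneg h1.1]; exact h1.2
            have h5 : |k a| = k a := abs_of_nonneg h2
            have h6 : |DV a u| * (|k a| * |(DV.mulVec y) a|) ≤ 1 * (k a * B) := by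
              apply mul_le_mul h4 _ (by positivity) zero_le_one
              rw [h5]; exact mul_le_mul_of_nonneg_left h3 h2
            linarith
        _ = Ksum * B := by rw [← Finset.sum_mul]
    rw [hy]
    calc |∑ u, M⁻¹ v u * (M.mulVec y) u|
        ≤ ∑ u, |M⁻¹ v u| * |(M.mulVec y) u| := by
          refine le_trans (Finset.abs_sum_le_sum_abs _ _) ?_
          exact Finset.sum_le_sum fun u _ => le_of_eq (abs_mul _ _)
      _ ≤ ∑ u, |M⁻¹ v u| * (Ksum * B) := Finset.sum_le_sum fun u _ =>
          mul_le_mul_of_nonneg_left (hMyb u) (abs_nonneg _)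
      _ = (∑ u, |M⁻¹ v u|) * (Ksum * B) := by rw [← Finset.sum_mul]
      _ ≤ C₂ * B := by
          have h1 : (∑ u, |M⁻¹ v u|) ≤ Finset.univ.sup' Finset.univ_nonempty
              (fun v : {p : P // 0 < xt p} => ∑ w, |M⁻¹ v w|) :=
            Finset.le_sup' (fun v : {p : P // 0 < xt p} => ∑ w, |M⁻¹ v w|) (Finset.mem_univ v)
          have h2 : 0 ≤ ∑ u, |M⁻¹ v u| := Finset.sum_nonneg fun u _ => abs_nonneg _
          rw [hC₂def]
          nlinarith [mul_le_mul_of_nonneg_right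
            (mul_le_mul_of_nonneg_right h1 hKsum.le) hB, mul_nonneg (mul_nonneg h2 hKsum.le) hB]
  clear_value Ksum kmin s C₂
  -- baseline flow facts
  set ft := aggFlow Δ xt with hftdef
  have hfta : ∀ a, ft a = ∑ p, Δ a p * xt p := fun a => rfl
  clear_value ft
  have hΔb : ∀ a p, 0 ≤ Δ a p ∧ Δ a p ≤ 1 := by
    intro a p; rcases hΔ a p with h | h <;> simp [h]
  have hft0 : ∀ a, 0 ≤ ft a := fun a => by
    rw [hfta a]
    exact Finset.sum_nonneg fun p _ => mul_nonneg (hΔb a p).1 (hxt0 p)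
  have hft1 : ∀ a, ft a ≤ 1 := by
    intro a
    rw [hfta a]
    calc ∑ p, Δ a p * xt p ≤ ∑ p, xt p :=
        Finset.sum_le_sum fun p _ => by nlinarith [(hΔb a p).1, (hΔb a p).2, hxt0 p]
      _ = 1 := hxt1
  have hp₀q : p₀ ≠ q := fun h => hqV (h ▸ hp₀)
  -- gap constants
  set ε₁ := (Finset.univ.filter fun p => ¬ 0 < xt p).inf'
      ⟨q, Finset.mem_filter.2 ⟨Finset.mem_univ q, hqV⟩⟩
      (fun p => CH Δ t ft p - lamt) with hε₁def
  have hε₁pos : 0 < ε₁ :=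
    (Finset.lt_inf'_iff _).2 fun p hp => sub_pos.2 (hunused p (Finset.mem_filter.1 hp).2)
  have hε₁le : ∀ p, ¬ 0 < xt p → ε₁ ≤ CH Δ t ft p - lamt :=
    fun p hp => Finset.inf'_le _ (Finset.mem_filter.2 ⟨Finset.mem_univ p, hp⟩)
  set ε₂ := (Finset.univ.filter fun p => p ≠ q).inf'
      ⟨p₀, Finset.mem_filter.2 ⟨Finset.mem_univ p₀, hp₀q⟩⟩
      (fun p => CA Δ t ft p - CA Δ t ft q) with hε₂def
  have hε₂pos : 0 < ε₂ :=
    (Finset.lt_inf'_iff _).2 fun p hp => sub_pos.2 (hqmin p (Finset.mem_filter.1 hp).2)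
  have hε₂le : ∀ p, p ≠ q → ε₂ ≤ CA Δ t ft p - CA Δ t ft q :=
    fun p hp => Finset.inf'_le _ (Finset.mem_filter.2 ⟨Finset.mem_univ p, hp⟩)
  set m := (Finset.univ : Finset {p : P // 0 < xt p}).inf' Finset.univ_nonempty
      (fun v => xt v.1) with hmdef
  have hmpos : 0 < m := (Finset.lt_inf'_iff _).2 fun v _ => v.2
  have hmle : ∀ v : {p : P // 0 < xt p}, m ≤ xt v.1 :=
    fun v => Finset.inf'_le _ (Finset.mem_univ v)
  -- thresholds
  set E := min (ε₁ / (2 * Ksum)) (min (ε₂ / (4 * Ksum)) (m / (2 * C₂))) with hEdef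
  have hEpos : 0 < E := lt_min (div_pos hε₁pos (by linarith))
    (lt_min (div_pos hε₂pos (by linarith)) (div_pos hmpos (by linarith)))
  clear_value ε₁ ε₂ m
  set C₀ := Ksum / kmin with hC₀def
  have hC₀pos : 0 < C₀ := div_pos hKsum hkmin
  clear_value E C₀
  refine ⟨min (E ^ 2 / C₀) (min (m / (2 * C₂)) (1 / 2)),
    lt_min (div_pos (pow_pos hEpos 2) hC₀pos)
      (lt_min (div_pos hmpos (by linarith)) (by norm_num)), ?_⟩
  intro α hα0 hαlt xH xA heq
  simp only [IsEquilibrium] at heq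
  obtain ⟨hxH0, hxA0, hxHs, hxAs, lamH, lamA, hw⟩ := heq
  set x : P → ℝ := fun r => xH r + xA r with hxdef
  have hxa : ∀ p, x p = xH p + xA p := fun p => rfl
  clear_value x
  set f := aggFlow Δ x with hfdef
  have hfa : ∀ a, f a = ∑ p, Δ a p * x p := fun a => rfl
  clear_value f
  set δ : L → ℝ := fun a => f a - ft a with hδdef
  have hδa : ∀ a, δ a = f a - ft a := fun a => rfl
  clear_value δ
  have hα12 : α < 1 / 2 :=
    lt_of_lt_of_le hαlt (le_trans (min_le_right _ _) (min_le_right _ _))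
  have hαm : α < m / (2 * C₂) :=
    lt_of_lt_of_le hαlt (le_trans (min_le_right _ _) (min_le_left _ _))
  have hαE2 : α < E ^ 2 / C₀ := lt_of_lt_of_le hαlt (min_le_left _ _)
  set D := Real.sqrt (C₀ * α) with hDdef
  have hD0 : 0 ≤ D := by rw [hDdef]; exact Real.sqrt_nonneg _
  clear_value D
  have hDE : D < E := by
    rw [hDdef]
    refine (Real.sqrt_lt' hEpos).2 ?_
    calc C₀ * α < C₀ * (E ^ 2 / C₀) := by
          exact mul_lt_mul_of_pos_left hαE2 hC₀pos
      _ = E ^ 2 := by field_simp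
  -- flow facts at α
  have hxs : ∑ p, x p = 1 := by
    calc ∑ p, x p = ∑ p, (xH p + xA p) := Finset.sum_congr rfl fun p _ => hxa p
      _ = 1 := by rw [Finset.sum_add_distrib, hxHs, hxAs]; ring
  have hx0 : ∀ p, 0 ≤ x p := fun p => by
    rw [hxa p]; exact add_nonneg (hxH0 p) (hxA0 p)
  have hf0 : ∀ a, 0 ≤ f a := fun a => by
    rw [hfa a]
    exact Finset.sum_nonneg fun p _ => mul_nonneg (hΔb a p).1 (hx0 p)
  have hf1 : ∀ a, f a ≤ 1 := by
    intro a
    rw [hfa a]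
    calc ∑ p, Δ a p * x p ≤ ∑ p, x p :=
        Finset.sum_le_sum fun p _ => by nlinarith [(hΔb a p).1, (hΔb a p).2, hx0 p]
      _ = 1 := hxs
  have hδ1 : ∀ a, |δ a| ≤ 1 := by
    intro a
    rw [hδa a]
    exact abs_le.2 ⟨by linarith [hf0 a, hft1 a], by linarith [hf1 a, hft0 a]⟩
  have CHdiff : ∀ p, CH Δ t f p - CH Δ t ft p = ∑ a, Δ a p * (k a * δ a) := by
    intro p
    rw [CHdef, CHdef, ← Finset.sum_sub_distrib]
    exact Finset.sum_congr rfl fun a _ => by rw [hδa a]; ring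
  have CAdiff : ∀ p, CA Δ t f p - CA Δ t ft p = ∑ a, Δ a p * (2 * (k a * δ a)) := by
    intro p
    rw [CAdef, CAdef, ← Finset.sum_sub_distrib]
    exact Finset.sum_congr rfl fun a _ => by rw [hδa a]; ring
  -- variational inequality
  have hA : ∑ p, xH p * CH Δ t f p = (1 - α) * lamH := by
    calc ∑ p, xH p * CH Δ t f p = ∑ p, xH p * lamH := by
          refine Finset.sum_congr rfl fun p _ => ?_
          rcases eq_or_lt_of_le (hxH0 p) with h | h
          · rw [← h]; ring
          · rw [(hw p).1.2 h]
      _ = (1 - α) * lamH := by rw [← Finset.sum_mul, hxHs]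
  have hC : ∑ p, xt p * CH Δ t ft p = lamt := by
    calc ∑ p, xt p * CH Δ t ft p = ∑ p, xt p * lamt := by
          refine Finset.sum_congr rfl fun p _ => ?_
          rcases eq_or_lt_of_le (hxt0 p) with h | h
          · rw [← h]; ring
          · rw [(hlamt p).2 h]
      _ = lamt := by rw [← Finset.sum_mul, hxt1, one_mul]
  have hB : (1 - α) * lamH ≤ (1 - α) * ∑ p, xt p * CH Δ t f p := by
    refine mul_le_mul_of_nonneg_left ?_ (by linarith)
    calc lamH = ∑ p, xt p * lamH := by rw [← Finset.sum_mul, hxt1, one_mul]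
      _ ≤ ∑ p, xt p * CH Δ t f p :=
        Finset.sum_le_sum fun p _ => mul_le_mul_of_nonneg_left (hw p).1.1 (hxt0 p)
  have hDd : (1 - α) * lamt ≤ ∑ p, xH p * CH Δ t ft p := by
    calc (1 - α) * lamt = ∑ p, xH p * lamt := by rw [← Finset.sum_mul, hxHs]
      _ ≤ ∑ p, xH p * CH Δ t ft p :=
        Finset.sum_le_sum fun p _ => mul_le_mul_of_nonneg_left (hlamt p).1 (hxH0 p)
  have hVIp : ∑ p, (xH p - (1 - α) * xt p) * (CH Δ t f p - CH Δ t ft p) ≤ 0 := by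
    have expand : ∑ p, (xH p - (1 - α) * xt p) * (CH Δ t f p - CH Δ t ft p)
        = (∑ p, xH p * CH Δ t f p) - (1 - α) * (∑ p, xt p * CH Δ t f p)
          - ((∑ p, xH p * CH Δ t ft p) - (1 - α) * (∑ p, xt p * CH Δ t ft p)) := by
      rw [Finset.mul_sum, Finset.mul_sum, ← Finset.sum_sub_distrib,
        ← Finset.sum_sub_distrib, ← Finset.sum_sub_distrib]
      exact Finset.sum_congr rfl fun p _ => by ring
    rw [expand, hA, hC]
    linarith [hB, hDd]
  have hswap : ∀ c : P → ℝ, ∑ p, c p * (∑ a, Δ a p * (k a * δ a))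
      = ∑ a, (k a * δ a) * (∑ p, Δ a p * c p) := by
    intro c
    simp only [Finset.mul_sum]
    rw [Finset.sum_comm]
    exact Finset.sum_congr rfl fun a _ => Finset.sum_congr rfl fun p _ => by ring
  set gA : L → ℝ := fun a => ∑ p, Δ a p * xA p with hgAdef
  have hgAa : ∀ a, gA a = ∑ p, Δ a p * xA p := fun a => rfl
  clear_value gA
  have hgA0 : ∀ a, 0 ≤ gA a := fun a => by
    rw [hgAa a]
    exact Finset.sum_nonneg fun p _ => mul_nonneg (hΔb a p).1 (hxA0 p)
  have hgAα : ∀ a, gA a ≤ α := by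
    intro a
    rw [hgAa a]
    calc ∑ p, Δ a p * xA p ≤ ∑ p, xA p :=
        Finset.sum_le_sum fun p _ => by nlinarith [(hΔb a p).1, (hΔb a p).2, hxA0 p]
      _ = α := hxAs
  have hΔxH : ∀ a, ∑ p, Δ a p * xH p = δ a + (1 - α) * ft a + (α * ft a - gA a) := by
    intro a
    have h1 : f a = (∑ p, Δ a p * xH p) + gA a := by
      rw [hfa a, hgAa a, ← Finset.sum_add_distrib]
      exact Finset.sum_congr rfl fun p _ => by rw [hxa p]; ring
    have h2 : δ a = f a - ft a := hδa a
    linarith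
  have hVIa : ∑ a, (k a * δ a) * (δ a + (α * ft a - gA a)) ≤ 0 := by
    have h1 : ∑ a, (k a * δ a) * (δ a + (α * ft a - gA a))
        = ∑ p, (xH p - (1 - α) * xt p) * (CH Δ t f p - CH Δ t ft p) := by
      have h2 := hswap (fun p => xH p - (1 - α) * xt p)
      calc ∑ a, (k a * δ a) * (δ a + (α * ft a - gA a))
          = ∑ a, (k a * δ a) * (∑ p, Δ a p * (xH p - (1 - α) * xt p)) := by
            refine Finset.sum_congr rfl fun a _ => ?_
            congr 1
            have h3 : ∑ p, Δ a p * (xH p - (1 - α) * xt p)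
                = (∑ p, Δ a p * xH p) - (1 - α) * ft a := by
              rw [hfta a, Finset.mul_sum, ← Finset.sum_sub_distrib]
              exact Finset.sum_congr rfl fun p _ => by ring
            rw [h3, hΔxH a]
            ring
        _ = ∑ p, (xH p - (1 - α) * xt p) * (∑ a, Δ a p * (k a * δ a)) := h2.symm
        _ = ∑ p, (xH p - (1 - α) * xt p) * (CH Δ t f p - CH Δ t ft p) :=
            Finset.sum_congr rfl fun p _ => by rw [CHdiff]
    rw [h1]; exact hVIp
  have hstep1 : ∑ a, k a * δ a ^ 2 ≤ Ksum * α := by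
    have hsplit : ∑ a, (k a * δ a) * (δ a + (α * ft a - gA a))
        = (∑ a, k a * δ a ^ 2) + ∑ a, (k a * δ a) * (α * ft a - gA a) := by
      rw [← Finset.sum_add_distrib]
      exact Finset.sum_congr rfl fun a _ => by ring
    have h4 : ∀ a, -((k a * δ a) * (α * ft a - gA a)) ≤ k a * α := by
      intro a
      have h5 : |α * ft a - gA a| ≤ α := abs_le.2
        ⟨by nlinarith [hgAα a, hft0 a, hα0.le], by nlinarith [hgA0 a, hft1 a, hα0.le]⟩
      have h6 : |(k a * δ a) * (α * ft a - gA a)| ≤ k a * α := by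
        rw [abs_mul, abs_mul, abs_of_nonneg (hk a).le]
        have h7 := hδ1 a
        have h9 : |δ a| * |α * ft a - gA a| ≤ 1 * α :=
          mul_le_mul h7 h5 (abs_nonneg _) zero_le_one
        have h10 := mul_le_mul_of_nonneg_left h9 (hk a).le
        linarith [h10]
      linarith [neg_abs_le ((k a * δ a) * (α * ft a - gA a))]
    have h8 : -(∑ a, (k a * δ a) * (α * ft a - gA a)) ≤ ∑ a, k a * α := by
      rw [← Finset.sum_neg_distrib]
      exact Finset.sum_le_sum fun a _ => h4 a
    have h9 : ∑ a, k a * α = Ksum * α := by rw [← Finset.sum_mul, hKsumdef]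
    linarith [hVIa, hsplit]
  have hδsq : ∀ a, δ a ^ 2 ≤ C₀ * α := by
    intro a
    have h1 : k a * δ a ^ 2 ≤ Ksum * α :=
      le_trans (Finset.single_le_sum (f := fun a => k a * δ a ^ 2)
        (fun a _ => mul_nonneg (hk a).le (sq_nonneg _)) (Finset.mem_univ a)) hstep1
    have h2 : kmin * δ a ^ 2 ≤ k a * δ a ^ 2 :=
      mul_le_mul_of_nonneg_right (hkminle a) (sq_nonneg _)
    rw [hC₀def, div_mul_eq_mul_div, le_div_iff₀ hkmin]
    nlinarith
  have hδD : ∀ a, |δ a| ≤ D := by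
    intro a
    have h1 := Real.sqrt_le_sqrt (hδsq a)
    rw [Real.sqrt_sq_eq_abs] at h1
    rw [hDdef]
    exact h1
  have hCHlip : ∀ p, |CH Δ t f p - CH Δ t ft p| ≤ Ksum * D := by
    intro p
    rw [CHdiff]
    calc |∑ a, Δ a p * (k a * δ a)| ≤ ∑ a, |Δ a p * (k a * δ a)| :=
        Finset.abs_sum_le_sum_abs _ _
      _ ≤ ∑ a, k a * D := by
          refine Finset.sum_le_sum fun a _ => ?_
          rw [abs_mul, abs_mul, abs_of_nonneg (hΔb a p).1, abs_of_nonneg (hk a).le]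
          have h1 : k a * |δ a| ≤ k a * D := mul_le_mul_of_nonneg_left (hδD a) (hk a).le
          have h2 : Δ a p * (k a * |δ a|) ≤ 1 * (k a * D) :=
            mul_le_mul (hΔb a p).2 h1 (mul_nonneg (hk a).le (abs_nonneg _)) zero_le_one
          linarith
      _ = Ksum * D := by rw [← Finset.sum_mul, hKsumdef]
  have hCAlip : ∀ p, |CA Δ t f p - CA Δ t ft p| ≤ 2 * (Ksum * D) := by
    intro p
    rw [CAdiff]
    calc |∑ a, Δ a p * (2 * (k a * δ a))| ≤ ∑ a, |Δ a p * (2 * (k a * δ a))| :=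
        Finset.abs_sum_le_sum_abs _ _
      _ ≤ ∑ a, 2 * (k a * D) := by
          refine Finset.sum_le_sum fun a _ => ?_
          rw [abs_mul, abs_mul, abs_mul, abs_of_nonneg (hΔb a p).1,
            abs_of_nonneg (hk a).le, abs_of_nonneg (by norm_num : (0:ℝ) ≤ 2)]
          have h1 : k a * |δ a| ≤ k a * D := mul_le_mul_of_nonneg_left (hδD a) (hk a).le
          have h2 : Δ a p * (2 * (k a * |δ a|)) ≤ 1 * (2 * (k a * D)) := by
            refine mul_le_mul (hΔb a p).2 (by linarith) ?_ zero_le_one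
            exact mul_nonneg (by norm_num) (mul_nonneg (hk a).le (abs_nonneg _))
          linarith
      _ = 2 * (Ksum * D) := by rw [← Finset.mul_sum, ← Finset.sum_mul, hKsumdef]
  have hKsumne : Ksum ≠ 0 := ne_of_gt hKsum
  have hEle1 : E ≤ ε₁ / (2 * Ksum) := by rw [hEdef]; exact min_le_left _ _
  have hEle2 : E ≤ ε₂ / (4 * Ksum) := by
    rw [hEdef]; exact le_trans (min_le_right _ _) (min_le_left _ _)
  have hEle3 : E ≤ m / (2 * C₂) := by
    rw [hEdef]; exact le_trans (min_le_right _ _) (min_le_right _ _)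
  have hD1 : Ksum * D < ε₁ / 2 := by
    calc Ksum * D < Ksum * E := mul_lt_mul_of_pos_left hDE hKsum
      _ ≤ Ksum * (ε₁ / (2 * Ksum)) :=
          mul_le_mul_of_nonneg_left hEle1 hKsum.le
      _ = ε₁ / 2 := by field_simp
  have hD2 : 2 * (Ksum * D) < ε₂ / 2 := by
    have h1 := hEle2
    calc 2 * (Ksum * D) < 2 * (Ksum * E) := by nlinarith
      _ ≤ 2 * (Ksum * (ε₂ / (4 * Ksum))) := by nlinarith [mul_le_mul_of_nonneg_left h1 hKsum.le]
      _ = ε₂ / 2 := by field_simp; ring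
  have hC₂ne : C₂ ≠ 0 := ne_of_gt hC₂pos
  have hD3 : C₂ * D < m / 2 := by
    have h1 := hEle3
    calc C₂ * D < C₂ * E := mul_lt_mul_of_pos_left hDE hC₂pos
      _ ≤ C₂ * (m / (2 * C₂)) := mul_le_mul_of_nonneg_left h1 hC₂pos.le
      _ = m / 2 := by field_simp
  have hD4 : C₂ * α < m / 2 := by
    calc C₂ * α < C₂ * (m / (2 * C₂)) := mul_lt_mul_of_pos_left hαm hC₂pos
      _ = m / 2 := by field_simp
  -- support identification
  have hHsupp : ∀ p, 0 < xH p → 0 < xt p := by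
    intro p hp
    by_contra hpv
    have h1 : CH Δ t f p = lamH := (hw p).1.2 hp
    have h2 := hε₁le p hpv
    have h3 : lamH ≤ CH Δ t f p₀ := (hw p₀).1.1
    have h4 : CH Δ t ft p₀ = lamt := (hlamt p₀).2 hp₀
    have l1 := abs_le.1 (hCHlip p)
    have l2 := abs_le.1 (hCHlip p₀)
    linarith [l1.1, l1.2, l2.1, l2.2, hD1]
  have hAsupp : ∀ p, p ≠ q → xA p = 0 := by
    intro p hpq
    by_contra hne
    have hp : 0 < xA p := lt_of_le_of_ne (hxA0 p) (Ne.symm hne)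
    have h1 : CA Δ t f p = lamA := (hw p).2.2 hp
    have h2 := hε₂le p hpq
    have h3 : lamA ≤ CA Δ t f q := (hw q).2.1
    have l1 := abs_le.1 (hCAlip p)
    have l2 := abs_le.1 (hCAlip q)
    linarith [l1.1, l1.2, l2.1, l2.2, hD2]
  have hxAq : xA q = α := by
    have h1 : ∑ p, xA p = xA q := Finset.sum_eq_single q
      (fun p _ hpq => hAsupp p hpq) (fun h => absurd (Finset.mem_univ q) h)
    exact h1.symm.trans hxAs
  have hxt_zero : ∀ p, ¬ 0 < xt p → xt p = 0 :=
    fun p hp => le_antisymm (not_lt.1 hp) (hxt0 p)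
  have hxH_zero : ∀ p, ¬ 0 < xt p → xH p = 0 := by
    intro p hp
    rcases eq_or_lt_of_le (hxH0 p) with h | h
    · exact h.symm
    · exact absurd (hHsupp p h) hp
  -- the support perturbation vector
  set y : {p : P // 0 < xt p} → ℝ := fun v => xH v.1 - xt v.1 with hydef
  have hya : ∀ v, y v = xH v.1 - xt v.1 := fun v => rfl
  clear_value y
  have hDVy2 : ∀ a, DV.mulVec y a = ∑ v : {p : P // 0 < xt p}, Δ a v.1 * y v := by
    intro a
    simp [Matrix.mulVec, dotProduct, hDV]
  have hDVy : ∀ a, DV.mulVec y a = δ a - α * Δ a q := by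
    intro a
    have h1 : ∑ p, Δ a p * xA p = α * Δ a q := by
      rw [Finset.sum_eq_single q (fun p _ hpq => by rw [hAsupp p hpq]; ring)
        (fun h => absurd (Finset.mem_univ q) h), hxAq]
      ring
    have h2 : DV.mulVec y a = ∑ p, Δ a p * (xH p - xt p) := by
      rw [sum_support_eq' xt (fun p => Δ a p * (xH p - xt p))
        (fun p hp => by show Δ a p * (xH p - xt p) = 0; rw [hxt_zero p hp, hxH_zero p hp]; ring)]
      rw [hDVy2 a]
      exact Finset.sum_congr rfl fun v _ => by rw [hya v]
    have h3 : δ a = (∑ p, Δ a p * (xH p - xt p)) + ∑ p, Δ a p * xA p := by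
      rw [hδa a, hfa a, hfta a, ← Finset.sum_add_distrib, ← Finset.sum_sub_distrib]
      exact Finset.sum_congr rfl fun p _ => by rw [hxa p]; ring
    rw [h2, h3, h1] at *
    linarith
  have hysmall : ∀ v, |y v| ≤ C₂ * (D + α) := by
    refine hC₂bound y (D + α) (by linarith) ?_
    intro a
    rw [hDVy a, sub_eq_add_neg]
    have h1 := abs_add_le (δ a) (-(α * Δ a q))
    rw [abs_neg, abs_mul, abs_of_nonneg hα0.le] at h1
    have h2 : α * |Δ a q| ≤ α * 1 := by
      have h3 : |Δ a q| ≤ 1 := by rw [abs_of_nonneg (hΔb a q).1]; exact (hΔb a q).2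
      exact mul_le_mul_of_nonneg_left h3 hα0.le
    linarith [hδD a]
  have hxHV : ∀ v : {p : P // 0 < xt p}, 0 < xH v.1 := by
    intro v
    have h1 := hysmall v
    have h2 := hmle v
    have h3 := hya v
    have h4 := neg_abs_le (y v)
    have h5 : C₂ * (D + α) = C₂ * D + C₂ * α := by ring
    linarith [hD3, hD4]
  -- Wardrop equalities on the support
  have hlamHv : ∀ v : {p : P // 0 < xt p}, CH Δ t f v.1 = lamH :=
    fun v => (hw v.1).1.2 (hxHV v)
  have hKδv : ∀ v : {p : P // 0 < xt p}, ∑ a, Δ a v.1 * (k a * δ a) = lamH - lamt := by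
    intro v
    rw [← CHdiff v.1, hlamHv v, (hlamt v.1).2 v.2]
  -- matrix equation
  set g : {p : P // 0 < xt p} → ℝ := fun v => ∑ a, Δ a v.1 * (k a * Δ a q) with hgdef
  have hga : ∀ v, g v = ∑ a, Δ a v.1 * (k a * Δ a q) := fun v => rfl
  have hgM : DVᵀ.mulVec (fun a => k a * Δ a q) = g := by
    funext v
    rw [hga]
    simp only [Matrix.mulVec, dotProduct, Matrix.transpose_apply, hDV, Matrix.of_apply]
  clear_value g
  rw [hgM] at hγ
  set u := dotProduct (fun _ => (1:ℝ)) (M⁻¹.mulVec g) with hudef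
  have hMy : M.mulVec y = fun v => (lamH - lamt) - α * g v := by
    rw [hmulKD]
    have hfun : (fun a => k a * DV.mulVec y a) = fun a => k a * (δ a - α * Δ a q) :=
      funext fun a => by rw [hDVy a]
    rw [hfun]
    funext v
    have h1 : (DVᵀ.mulVec (fun a => k a * (δ a - α * Δ a q))) v
        = ∑ a, Δ a v.1 * (k a * (δ a - α * Δ a q)) := by
      simp only [Matrix.mulVec, dotProduct, Matrix.transpose_apply, hDV, Matrix.of_apply]
    rw [h1]
    have h2 : ∑ a, Δ a v.1 * (k a * (δ a - α * Δ a q))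
        = (∑ a, Δ a v.1 * (k a * δ a)) - α * ∑ a, Δ a v.1 * (k a * Δ a q) := by
      rw [Finset.mul_sum, ← Finset.sum_sub_distrib]
      exact Finset.sum_congr rfl fun a _ => by ring
    rw [h2, hKδv v, ← hga v]
  -- sums over the support
  have hxHsum : ∑ v : {p : P // 0 < xt p}, xH v.1 = 1 - α := by
    rw [← sum_support_eq' xt xH hxH_zero]
    exact hxHs
  have hxtsum : ∑ v : {p : P // 0 < xt p}, xt v.1 = 1 := by
    rw [← sum_support_eq' xt xt hxt_zero]
    exact hxt1
  have hsumy : ∑ v, y v = -α := by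
    calc ∑ v, y v = ∑ v : {p : P // 0 < xt p}, (xH v.1 - xt v.1) :=
        Finset.sum_congr rfl fun v _ => hya v
      _ = -α := by rw [Finset.sum_sub_distrib, hxHsum, hxtsum]; ring
  -- the multiplier increment
  have hlamHval : lamH - lamt = α * γ := by
    have hy2 : y = M⁻¹.mulVec (fun v => (lamH - lamt) - α * g v) := by
      rw [← hMy, hrecover]
    have h4 : (fun v : {p : P // 0 < xt p} => (lamH - lamt) - α * g v)
        = ((lamH - lamt) • (fun _ => (1:ℝ)) + (-α) • g) := by
      funext v
      simp only [Pi.add_apply, Pi.smul_apply, smul_eq_mul]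
      ring
    have h3 : ∑ v, y v = (lamH - lamt) * s - α * u := by
      rw [hy2, h4, Matrix.mulVec_add, Matrix.mulVec_smul, Matrix.mulVec_smul]
      have h5 : s = ∑ v, (M⁻¹.mulVec (fun _ => (1:ℝ))) v := by
        rw [hsdef]
        simp [dotProduct]
      have h6 : u = ∑ v, (M⁻¹.mulVec g) v := by
        rw [hudef]
        simp [dotProduct]
      rw [h5, h6]
      simp only [Pi.add_apply, Pi.smul_apply, smul_eq_mul]
      rw [Finset.sum_add_distrib, Finset.mul_sum, Finset.mul_sum]
      have h7 : ∑ v : {p : P // 0 < xt p}, -α * (M⁻¹.mulVec g) v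
          = -∑ v : {p : P // 0 < xt p}, α * (M⁻¹.mulVec g) v := by
        rw [← Finset.sum_neg_distrib]
        exact Finset.sum_congr rfl fun v _ => by ring
      rw [h7]
      ring
    have h5 : (lamH - lamt) * s - α * u = -α := by rw [← h3, hsumy]
    have hsne : s ≠ 0 := ne_of_gt hs
    have h6 : γ = (u - 1) / s := hγ
    rw [h6]
    field_simp
    linarith [h5]
  -- social cost computation
  have hBterm : ∑ a, k a * (ft a * δ a) = lamH - lamt := by
    have hftv : ∀ a, ft a = ∑ v : {p : P // 0 < xt p}, Δ a v.1 * xt v.1 := by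
      intro a
      rw [hfta a, sum_support_eq' xt (fun p => Δ a p * xt p)
        (fun p hp => by show Δ a p * xt p = 0; rw [hxt_zero p hp]; ring)]
    have h1 : ∀ a, k a * (ft a * δ a)
        = ∑ v : {p : P // 0 < xt p}, xt v.1 * (Δ a v.1 * (k a * δ a)) := by
      intro a
      rw [hftv a, Finset.sum_mul, Finset.mul_sum]
      exact Finset.sum_congr rfl fun v _ => by ring
    calc ∑ a, k a * (ft a * δ a)
        = ∑ a, ∑ v : {p : P // 0 < xt p}, xt v.1 * (Δ a v.1 * (k a * δ a)) :=
          Finset.sum_congr rfl fun a _ => h1 a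
      _ = ∑ v : {p : P // 0 < xt p}, ∑ a, xt v.1 * (Δ a v.1 * (k a * δ a)) :=
          Finset.sum_comm
      _ = ∑ v : {p : P // 0 < xt p}, xt v.1 * (lamH - lamt) := by
          refine Finset.sum_congr rfl fun v _ => ?_
          rw [← Finset.mul_sum, hKδv v]
      _ = lamH - lamt := by rw [← Finset.sum_mul, hxtsum, one_mul]
  have hδ2 : ∀ a, δ a = (∑ v : {p : P // 0 < xt p}, Δ a v.1 * y v) + α * Δ a q := by
    intro a
    rw [← hDVy2 a]
    have := hDVy a
    linarith
  have hCterm : ∑ a, b a * δ a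
      = α * CH Δ t ft q - α * lamt - (lamH - lamt) := by
    have h1 : ∑ a, b a * δ a
        = (∑ v : {p : P // 0 < xt p}, y v * (∑ a, Δ a v.1 * b a))
          + α * ∑ a, Δ a q * b a := by
      calc ∑ a, b a * δ a
          = ∑ a, ((∑ v : {p : P // 0 < xt p}, b a * (Δ a v.1 * y v))
              + b a * (α * Δ a q)) := by
            refine Finset.sum_congr rfl fun a _ => ?_
            rw [hδ2 a, mul_add, Finset.mul_sum]
        _ = (∑ a, ∑ v : {p : P // 0 < xt p}, b a * (Δ a v.1 * y v))
              + ∑ a, b a * (α * Δ a q) := Finset.sum_add_distrib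
        _ = (∑ v : {p : P // 0 < xt p}, y v * (∑ a, Δ a v.1 * b a))
              + α * ∑ a, Δ a q * b a := by
            congr 1
            · rw [Finset.sum_comm]
              refine Finset.sum_congr rfl fun v _ => ?_
              rw [Finset.mul_sum]
              exact Finset.sum_congr rfl fun a _ => by ring
            · rw [Finset.mul_sum]
              exact Finset.sum_congr rfl fun a _ => by ring
    have hβv : ∀ v : {p : P // 0 < xt p},
        (∑ a, Δ a v.1 * b a) = lamt - ∑ a, Δ a v.1 * (k a * ft a) := by
      intro v
      have h2 := (hlamt v.1).2 v.2
      rw [CHdef] at h2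
      have h3 : ∑ a, Δ a v.1 * (k a * ft a + b a)
          = (∑ a, Δ a v.1 * (k a * ft a)) + ∑ a, Δ a v.1 * b a := by
        rw [← Finset.sum_add_distrib]
        exact Finset.sum_congr rfl fun a _ => by ring
      rw [h3] at h2
      linarith
    have hyh : ∑ v : {p : P // 0 < xt p}, y v * (∑ a, Δ a v.1 * (k a * ft a))
        = (lamH - lamt) - α * ∑ a, Δ a q * (k a * ft a) := by
      have h2 : ∑ v : {p : P // 0 < xt p}, y v * (∑ a, Δ a v.1 * (k a * ft a))
          = ∑ a, (k a * ft a) * (∑ v : {p : P // 0 < xt p}, Δ a v.1 * y v) := by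
        simp only [Finset.mul_sum]
        rw [Finset.sum_comm]
        exact Finset.sum_congr rfl fun a _ => Finset.sum_congr rfl fun v _ => by ring
      rw [h2]
      have h3 : ∀ a, (∑ v : {p : P // 0 < xt p}, Δ a v.1 * y v) = δ a - α * Δ a q := by
        intro a
        have := hδ2 a
        linarith
      calc ∑ a, (k a * ft a) * (∑ v : {p : P // 0 < xt p}, Δ a v.1 * y v)
          = ∑ a, ((k a * (ft a * δ a)) - α * (Δ a q * (k a * ft a))) := by
            refine Finset.sum_congr rfl fun a _ => ?_
            rw [h3 a]
            ring
        _ = (lamH - lamt) - α * ∑ a, Δ a q * (k a * ft a) := by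
            rw [Finset.sum_sub_distrib, hBterm, ← Finset.mul_sum]
    have hβq : (∑ a, Δ a q * b a) = CH Δ t ft q - ∑ a, Δ a q * (k a * ft a) := by
      have h2 : CH Δ t ft q = (∑ a, Δ a q * (k a * ft a)) + ∑ a, Δ a q * b a := by
        rw [CHdef, ← Finset.sum_add_distrib]
        exact Finset.sum_congr rfl fun a _ => by ring
      linarith
    rw [h1]
    have h4 : ∑ v : {p : P // 0 < xt p}, y v * (∑ a, Δ a v.1 * b a)
        = lamt * (∑ v : {p : P // 0 < xt p}, y v)
          - ∑ v : {p : P // 0 < xt p}, y v * (∑ a, Δ a v.1 * (k a * ft a)) := by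
      rw [Finset.mul_sum, ← Finset.sum_sub_distrib]
      exact Finset.sum_congr rfl fun v _ => by rw [hβv v]; ring
    rw [h4, hsumy, hyh, hβq]
    ring
  have hSdiff : Scost t f - Scost t ft
      = (∑ a, k a * δ a ^ 2) + 2 * (∑ a, k a * (ft a * δ a)) + ∑ a, b a * δ a := by
    have h1 : ∀ a, f a * t a (f a) - ft a * t a (ft a)
        = k a * δ a ^ 2 + 2 * (k a * (ft a * δ a)) + b a * δ a := by
      intro a
      rw [hlin a (f a), hlin a (ft a), hδa a]
      ring
    calc Scost t f - Scost t ft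
        = ∑ a, (f a * t a (f a) - ft a * t a (ft a)) := by
          rw [Scost, Scost, ← Finset.sum_sub_distrib]
      _ = ∑ a, (k a * δ a ^ 2 + 2 * (k a * (ft a * δ a)) + b a * δ a) :=
          Finset.sum_congr rfl fun a _ => h1 a
      _ = (∑ a, k a * δ a ^ 2) + 2 * (∑ a, k a * (ft a * δ a)) + ∑ a, b a * δ a := by
          rw [Finset.sum_add_distrib, Finset.sum_add_distrib, ← Finset.mul_sum]
  have hApos : 0 ≤ ∑ a, k a * δ a ^ 2 :=
    Finset.sum_nonneg fun a _ => mul_nonneg (hk a).le (sq_nonneg _)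
  have hgoal := mul_pos hα0 hpos
  have hfinal : Scost t f - Scost t ft ≥ α * (CH Δ t ft q - lamt + γ) := by
    rw [hSdiff, hBterm, hCterm, hlamHval]
    linarith only [hApos]
  linarith only [hfinal, hgoal]
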